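/- arXiv:2010.06941 — 3 statements merged into one kernel-verified Lean document; each statement's English description precedes it below -/
import Mathlib

section
/- Let 0 = w_0 < w_1 < … < w_m = 1 and set p_ℓ = w_ℓ − w_{ℓ-1}. Let Ψ_X and Ψ_Y be piecewise-linear quantile functions with these common breakpoints, with centers (c_{Xℓ})_{ℓ=1}^m, (c_{Yℓ})_{ℓ=1}^m and half-ranges (r_{Xℓ})_{ℓ=1}^m, (r_{Yℓ})_{ℓ=1}^m (half-ranges nonnegative). Then ∫₀¹ (Ψ_X(t) − Ψ_Y(t))² dt = ∑_{ℓ=1}^m p_ℓ·[(c_{Xℓ} − c_{Yℓ})² + (1/3)·(r_{Xℓ} − r_{Yℓ})²]. -/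
/-- `Ψ` is the piecewise-linear quantile function with breakpoints
`0 = w 0 < w 1 < … < w m = 1`, centers `c 1, …, c m` and half-ranges `r 1, …, r m`:
on the piece `[w (ℓ-1), w ℓ)` (for `ℓ < m`), and on `[w (m-1), 1]` for the last piece,
`Ψ t = c ℓ + (2(t − w (ℓ-1))/(w ℓ − w (ℓ-1)) − 1) · r ℓ`. -/
lemma aux_poly (a b K L : ℝ) :
    ∫ t in a..b, (K + L * t) ^ 2
      = K ^ 2 * (b - a) + K * L * (b ^ 2 - a ^ 2) + L ^ 2 * (b ^ 3 - a ^ 3) / 3 := by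
  have h : ∀ t : ℝ, (K + L * t) ^ 2 = K ^ 2 + (2 * K * L) * t + L ^ 2 * t ^ 2 := by
    intro t; ring
  simp_rw [h]
  rw [intervalIntegral.integral_add, intervalIntegral.integral_add,
    intervalIntegral.integral_const, intervalIntegral.integral_const_mul,
    intervalIntegral.integral_const_mul, integral_id,
    integral_pow]
  · simp only [smul_eq_mul]; push_cast; ring
  · exact intervalIntegrable_const
  · exact ((continuous_const.mul continuous_id).intervalIntegrable _ _)
  · exact (intervalIntegrable_const.add ((continuous_const.mul continuous_id).intervalIntegrable _ _))
  · exact ((continuous_const.mul (continuous_pow 2)).intervalIntegrable _ _)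

lemma aux_piece (a b C R : ℝ) (hab : a < b) :
    ∫ t in a..b, (C + (2 * (t - a) / (b - a) - 1) * R) ^ 2
      = (b - a) * (C ^ 2 + (1 / 3) * R ^ 2) := by
  have hD : b - a ≠ 0 := sub_ne_zero.mpr hab.ne'
  have h : ∀ t : ℝ, (C + (2 * (t - a) / (b - a) - 1) * R) ^ 2
      = ((C - R - 2 * a * R / (b - a)) + (2 * R / (b - a)) * t) ^ 2 := by
    intro t; field_simp; ring
  simp_rw [h, aux_poly]
  field_simp
  ring

def IsPWQuantile (m : ℕ) (w : ℕ → ℝ) (c r : ℕ → ℝ) (Ψ : ℝ → ℝ) : Prop :=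
  (∀ ℓ, 1 ≤ ℓ → ℓ < m → ∀ t ∈ Set.Ico (w (ℓ - 1)) (w ℓ),
      Ψ t = c ℓ + (2 * (t - w (ℓ - 1)) / (w ℓ - w (ℓ - 1)) - 1) * r ℓ) ∧
  (∀ t ∈ Set.Icc (w (m - 1)) 1,
      Ψ t = c m + (2 * (t - w (m - 1)) / (w m - w (m - 1)) - 1) * r m)

/-- The squared Mallows distance between two piecewise-linear quantile functions with common
breakpoints: `∫₀¹ (Ψ_X − Ψ_Y)² = ∑_ℓ p_ℓ [(c_{Xℓ} − c_{Yℓ})² + (1/3)(r_{Xℓ} − r_{Yℓ})²]`,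
where `p_ℓ = w_ℓ − w_{ℓ-1}`. -/
theorem mallows_distance_formula (m : ℕ) (hm : 1 ≤ m) (w : ℕ → ℝ)
    (hw0 : w 0 = 0) (hwm : w m = 1) (hmono : ∀ ℓ < m, w ℓ < w (ℓ + 1))
    (cX rX cY rY : ℕ → ℝ) (hrX : ∀ ℓ, 0 ≤ rX ℓ) (hrY : ∀ ℓ, 0 ≤ rY ℓ)
    (ΨX ΨY : ℝ → ℝ)
    (hX : IsPWQuantile m w cX rX ΨX) (hY : IsPWQuantile m w cY rY ΨY) :
    ∫ t in (0:ℝ)..1, (ΨX t - ΨY t) ^ 2 =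
      ∑ ℓ ∈ Finset.Icc 1 m,
        (w ℓ - w (ℓ - 1)) * ((cX ℓ - cY ℓ) ^ 2 + (1 / 3) * (rX ℓ - rY ℓ) ^ 2) := by

  set f : ℝ → ℝ := fun t => (ΨX t - ΨY t) ^ 2 with hf
  -- per-piece facts
  have key : ∀ ℓ, 1 ≤ ℓ → ℓ ≤ m →
      IntervalIntegrable f MeasureTheory.volume (w (ℓ - 1)) (w ℓ) ∧
      ∫ t in (w (ℓ - 1))..(w ℓ), f t
        = (w ℓ - w (ℓ - 1)) * ((cX ℓ - cY ℓ) ^ 2 + (1 / 3) * (rX ℓ - rY ℓ) ^ 2) := by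
    intro ℓ hℓ1 hℓm
    set a := w (ℓ - 1) with ha
    set b := w ℓ with hb
    have hab : a < b := by
      have h1 : ℓ - 1 < m := lt_of_lt_of_le (Nat.sub_lt hℓ1 one_pos) hℓm
      have := hmono (ℓ - 1) h1
      rwa [Nat.sub_add_cancel hℓ1] at this
    set g : ℝ → ℝ := fun t =>
      ((cX ℓ - cY ℓ) + (2 * (t - a) / (b - a) - 1) * (rX ℓ - rY ℓ)) ^ 2 with hg
    have hgc : Continuous g := by
      apply Continuous.pow
      fun_prop
    have heq : ∀ t ∈ Set.Ico a b, f t = g t := by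
      intro t ht
      rcases eq_or_lt_of_le hℓm with hem | hlt
      · subst hem
        have htm : t ∈ Set.Icc (w (ℓ - 1)) 1 := ⟨ht.1, (ht.2.trans_eq hwm).le⟩
        simp only [hf, hg]
        rw [hX.2 t htm, hY.2 t htm]
        ring
      · simp only [hf, hg]
        rw [hX.1 ℓ hℓ1 hlt t ht, hY.1 ℓ hℓ1 hlt t ht]
        ring
    have hae : ∀ᵐ t ∂(MeasureTheory.volume), t ∈ Set.Ioc a b → f t = g t := by
      have h1 : ∀ᵐ t : ℝ ∂(MeasureTheory.volume), t ≠ b := by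
        have := MeasureTheory.compl_mem_ae_iff.mpr
          (MeasureTheory.measure_singleton (μ := MeasureTheory.volume) b)
        filter_upwards [this] with t ht
        simpa using ht
      filter_upwards [h1] with t htne ht
      exact heq t ⟨ht.1.le, lt_of_le_of_ne ht.2 htne⟩
    have hInt_g : IntervalIntegrable g MeasureTheory.volume a b :=
      hgc.intervalIntegrable _ _
    have hInt_f : IntervalIntegrable f MeasureTheory.volume a b := by
      rw [intervalIntegrable_iff_integrableOn_Ioc_of_le hab.le] at hInt_g ⊢
      exact hInt_g.congr ((MeasureTheory.ae_restrict_iff' measurableSet_Ioc).mpr (hae.mono fun t h ht => (h ht).symm))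
    refine ⟨hInt_f, ?_⟩
    have hcongr : ∫ t in a..b, f t = ∫ t in a..b, g t := by
      apply intervalIntegral.integral_congr_ae
      rwa [Set.uIoc_of_le hab.le]
    rw [hcongr]
    exact aux_piece a b _ _ hab
  -- induction over pieces
  have main : ∀ k, k ≤ m →
      IntervalIntegrable f MeasureTheory.volume (w 0) (w k) ∧
      ∫ t in (w 0)..(w k), f t = ∑ ℓ ∈ Finset.Icc 1 k,
        (w ℓ - w (ℓ - 1)) * ((cX ℓ - cY ℓ) ^ 2 + (1 / 3) * (rX ℓ - rY ℓ) ^ 2) := by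
    intro k
    induction k with
    | zero =>
      intro _
      constructor
      · simp [IntervalIntegrable]
      · simp
    | succ n ih =>
      intro hnm
      obtain ⟨ih_int, ih_val⟩ := ih (Nat.le_of_succ_le hnm)
      obtain ⟨p_int, p_val⟩ := key (n + 1) (Nat.succ_le_succ (Nat.zero_le n)) hnm
      simp only [Nat.add_sub_cancel] at p_int p_val
      refine ⟨ih_int.trans p_int, ?_⟩
      rw [← intervalIntegral.integral_add_adjacent_intervals ih_int p_int,
        ih_val, Finset.sum_Icc_succ_top (Nat.succ_le_succ (Nat.zero_le n)), p_val,
        Nat.add_sub_cancel]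
    -- done
  have := (main m le_rfl).2
  rw [hw0, hwm] at this
  exact this
end

section
/- Let f_{ij} ∈ L²([0,1], ℝ) for i = 1, …, n and j = 1, …, p, and assume each reflected function t ↦ f_{ij}(1−t) also lies in L²([0,1], ℝ). For γ = (a_1, b_1, …, a_p, b_p) ∈ ℝ^{2p}, define the score S_i(γ)(t) = ∑_{j=1}^p a_j·f_{ij}(t) − ∑_{j=1}^p b_j·f_{ij}(1−t) and the barycentric score S̄(γ) = (1/n)·∑_{i=1}^n S_i(γ). For each i define g_{i,2j−1}(t) = f_{ij}(t) − (1/n)·∑_{k=1}^n f_{kj}(t) and g_{i,2j}(t) = −f_{ij}(1−t) + (1/n)·∑_{k=1}^n f_{kj}(1−t), and let T be the 2p × 2p symmetric matrix with entries T_{hq} = ∑_{i=1}^n ⟨g_{i,h}, g_{i,q}⟩_{L²}. Then for every γ ∈ ℝ^{2p}, ∑_{i=1}^n D_M²(S_i(γ), S̄(γ)) = γᵀ T γ; i.e. the sum of squared Mallows distances between the scores and the barycentric score is a quadratic form in the weight vector with the total sums-of-squares-and-cross-products matrix T. -/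
open MeasureTheory Matrix

/-- The Lebesgue measure restricted to the interval `[0,1]`. -/
noncomputable def μ01 : Measure ℝ := volume.restrict (Set.Icc (0:ℝ) 1)

/-- Squared Mallows distance between two functions, as elements of `L²([0,1],ℝ)`. -/
noncomputable def DM2f (f g : ℝ → ℝ) : ℝ := ∫ t, (f t - g t) ^ 2 ∂μ01

lemma memL2_mul_integrable {μ : MeasureTheory.Measure ℝ} {f g : ℝ → ℝ}
    (hf : MeasureTheory.MemLp f 2 μ) (hg : MeasureTheory.MemLp g 2 μ) :
    MeasureTheory.Integrable (fun t => f t * g t) μ := by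
  have h1 : MeasureTheory.Integrable
      (fun t => ((f t + g t) ^ 2 - f t ^ 2 - g t ^ 2) * 2⁻¹) μ :=
    (((hf.add hg).integrable_sq.sub hf.integrable_sq).sub hg.integrable_sq).mul_const _
  refine h1.congr (Filter.Eventually.of_forall fun t => ?_)
  ring

/-- The sum of squared Mallows distances between the discriminant scores
`S_i(γ)(t) = ∑ⱼ aⱼ f_{ij}(t) − ∑ⱼ bⱼ f_{ij}(1−t)` and the barycentric score
`S̄(γ) = (1/n) ∑ᵢ S_i(γ)` is the quadratic form `γᵀ T γ`, where `T` is the total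
sums-of-squares-and-cross-products matrix of the centered functions
`g_{i,2j−1}(t) = f_{ij}(t) − (1/n)∑ₖ f_{kj}(t)` and
`g_{i,2j}(t) = −f_{ij}(1−t) + (1/n)∑ₖ f_{kj}(1−t)`
(here the odd coordinates are indexed by `Sum.inl j` and the even ones by `Sum.inr j`). -/
theorem score_inertia_is_quadratic_form (n p : ℕ)
    (f : Fin n → Fin p → ℝ → ℝ)
    (hf : ∀ i j, MemLp (f i j) 2 μ01)
    (hf' : ∀ i j, MemLp (fun t => f i j (1 - t)) 2 μ01)
    (a b : Fin p → ℝ)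
    (S : Fin n → ℝ → ℝ)
    (hS : ∀ i, ∀ t : ℝ, S i t = ∑ j, a j * f i j t - ∑ j, b j * f i j (1 - t))
    (Sbar : ℝ → ℝ) (hSbar : ∀ t : ℝ, Sbar t = (n : ℝ)⁻¹ * ∑ i, S i t)
    (g : Fin n → (Fin p ⊕ Fin p) → ℝ → ℝ)
    (hg1 : ∀ i j, ∀ t : ℝ, g i (Sum.inl j) t = f i j t - (n : ℝ)⁻¹ * ∑ k, f k j t)
    (hg2 : ∀ i j, ∀ t : ℝ,
      g i (Sum.inr j) t = -(f i j (1 - t)) + (n : ℝ)⁻¹ * ∑ k, f k j (1 - t))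
    (T : Matrix (Fin p ⊕ Fin p) (Fin p ⊕ Fin p) ℝ)
    (hT : ∀ h q, T h q = ∑ i, ∫ t, g i h t * g i q t ∂μ01)
    (γ : Fin p ⊕ Fin p → ℝ)
    (hγ : ∀ j, γ (Sum.inl j) = a j ∧ γ (Sum.inr j) = b j) :
    ∑ i, DM2f (S i) Sbar = γ ⬝ᵥ T.mulVec γ := by
  -- membership in L²
  have hgmem : ∀ i h, MemLp (g i h) 2 μ01 := by
    rintro i (j | j)
    · have e : g i (Sum.inl j) = fun t => f i j t - (n : ℝ)⁻¹ * ∑ k, f k j t :=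
        funext (hg1 i j)
      rw [e]
      exact (hf i j).sub ((memLp_finset_sum _ (fun k _ => hf k j)).const_mul _)
    · have e : g i (Sum.inr j) = fun t => -(f i j (1 - t)) + (n : ℝ)⁻¹ * ∑ k, f k j (1 - t) :=
        funext (hg2 i j)
      rw [e]
      exact (hf' i j).neg.add ((memLp_finset_sum _ (fun k _ => hf' k j)).const_mul _)
  have hint : ∀ i h q, Integrable (fun t => g i h t * g i q t) μ01 :=
    fun i h q => memL2_mul_integrable (hgmem i h) (hgmem i q)
  -- pointwise decomposition
  have key : ∀ i t, S i t - Sbar t = ∑ h, γ h * g i h t := by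
    intro i t
    rw [Fintype.sum_sum_type]
    simp only [hg1, hg2, (hγ _).1, (hγ _).2, hS, hSbar, Finset.sum_sub_distrib]
    rw [Finset.sum_comm (f := fun (k : Fin n) (j : Fin p) => a j * f k j t),
      Finset.sum_comm (f := fun (k : Fin n) (j : Fin p) => b j * f k j (1 - t))]
    have e1 : ∀ (c : Fin p → ℝ) (F : Fin p → ℝ),
        (↑n : ℝ)⁻¹ * ∑ x, c x * F x = ∑ x, c x * (↑n : ℝ)⁻¹ * F x := by
      intro c F
      rw [Finset.mul_sum]
      exact Finset.sum_congr rfl fun x _ => by ring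
    simp only [mul_sub, mul_add, mul_neg, Finset.sum_sub_distrib, Finset.sum_add_distrib,
      ← Finset.mul_sum, Finset.sum_neg_distrib, e1]
    have e2 : ∀ (c : Fin p → ℝ) (F : Fin p → ℝ),
        ∑ x, c x * (↑n : ℝ)⁻¹ * F x = ∑ x, (↑n : ℝ)⁻¹ * c x * F x :=
      fun c F => Finset.sum_congr rfl fun x _ => by ring
    simp only [e2]
    ring
  have hDM : ∀ i, DM2f (S i) Sbar
      = ∑ h, ∑ q, γ h * γ q * ∫ t, g i h t * g i q t ∂μ01 := by
    intro i
    unfold DM2f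
    have e : ∀ t, (S i t - Sbar t) ^ 2 = ∑ h, ∑ q, γ h * γ q * (g i h t * g i q t) := by
      intro t
      rw [key i t, sq, Finset.sum_mul_sum]
      exact Finset.sum_congr rfl fun h _ => Finset.sum_congr rfl fun q _ => by ring
    simp_rw [e]
    rw [integral_finset_sum _ (fun h _ =>
      integrable_finset_sum _ (fun q _ => (hint i h q).const_mul _))]
    refine Finset.sum_congr rfl fun h _ => ?_
    rw [integral_finset_sum _ (fun q _ => (hint i h q).const_mul _)]
    exact Finset.sum_congr rfl fun q _ => integral_const_mul _ _
  simp_rw [hDM]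
  rw [Finset.sum_comm]
  simp only [dotProduct, mulVec, hT, Finset.mul_sum]
  refine Finset.sum_congr rfl fun h _ => ?_
  rw [Finset.sum_comm]
  refine Finset.sum_congr rfl fun q _ => ?_
  simp only [← Finset.mul_sum]
  ring
end

section
/- (Completely positive reformulation of the constrained fractional quadratic problem.) Let B and W be symmetric d × d real matrices such that γᵀWγ > 0 for every entrywise-nonnegative γ ∈ ℝ^d with γ ≠ 0. Then sup { γᵀBγ : γ ∈ ℝ^d, γ ≥ 0 entrywise, γᵀWγ = 1 } = sup { trace(B·Γ) : Γ completely positive, trace(W·Γ) = 1 }, where a symmetric d × d matrix Γ is completely positive if Γ = Y·Yᵀ for some d × k real matrix Y with all entries nonnegative (for some k ≥ 1). -/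
open Matrix

/-- A symmetric `d × d` real matrix is completely positive if it factors as `Y * Yᵀ` for some
entrywise-nonnegative `d × k` real matrix `Y` (for some `k ≥ 1`). -/
def CompletelyPositive {d : ℕ} (Γ : Matrix (Fin d) (Fin d) ℝ) : Prop :=
  ∃ k : ℕ, 1 ≤ k ∧ ∃ Y : Matrix (Fin d) (Fin k) ℝ,
    (∀ i j, 0 ≤ Y i j) ∧ Γ = Y * Yᵀ


lemma trace_factor {d k : ℕ} (M : Matrix (Fin d) (Fin d) ℝ) (Y : Matrix (Fin d) (Fin k) ℝ) :
    (M * (Y * Yᵀ)).trace = ∑ l : Fin k, (fun i => Y i l) ⬝ᵥ M.mulVec (fun i => Y i l) := by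
  simp only [Matrix.trace, Matrix.mul_apply, Matrix.diag, dotProduct, Matrix.mulVec,
    Matrix.transpose_apply, Finset.mul_sum, Finset.sum_mul]
  rw [show (∑ x : Fin d, ∑ x1 : Fin d, ∑ i : Fin k, M x x1 * (Y x1 i * Y x i))
      = ∑ x : Fin d, ∑ i : Fin k, ∑ x1 : Fin d, M x x1 * (Y x1 i * Y x i) from
    Finset.sum_congr rfl fun x _ => Finset.sum_comm .., Finset.sum_comm]
  refine Finset.sum_congr rfl fun l _ => Finset.sum_congr rfl fun i _ =>
    Finset.sum_congr rfl fun j _ => by ring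

lemma normalize_mem {d : ℕ} (B W : Matrix (Fin d) (Fin d) ℝ) (v : Fin d → ℝ)
    (hv : ∀ i, 0 ≤ v i) (ht : 0 < v ⬝ᵥ W.mulVec v) :
    (v ⬝ᵥ B.mulVec v) / (v ⬝ᵥ W.mulVec v) ∈
      {x : ℝ | ∃ γ : Fin d → ℝ, (∀ h, 0 ≤ γ h) ∧ γ ⬝ᵥ W.mulVec γ = 1 ∧
        x = γ ⬝ᵥ B.mulVec γ} := by
  set t := v ⬝ᵥ W.mulVec v with htdef
  have hs : (0:ℝ) < Real.sqrt t := Real.sqrt_pos.mpr ht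
  refine ⟨(Real.sqrt t)⁻¹ • v, fun i => mul_nonneg (inv_nonneg.mpr hs.le) (hv i), ?_, ?_⟩
  · simp only [Matrix.mulVec_smul, smul_dotProduct, dotProduct_smul, smul_eq_mul, ← htdef]
    rw [← mul_assoc, ← mul_inv, Real.mul_self_sqrt ht.le]
    exact inv_mul_cancel₀ ht.ne'
  · simp only [Matrix.mulVec_smul, smul_dotProduct, dotProduct_smul, smul_eq_mul]
    rw [← mul_assoc, ← mul_inv, Real.mul_self_sqrt ht.le, div_eq_inv_mul]

/-- Completely positive reformulation of the constrained fractional quadratic problem: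
if `γᵀWγ > 0` on the nonzero nonnegative orthant, then
`sup { γᵀBγ : γ ≥ 0, γᵀWγ = 1 } = sup { trace(BΓ) : Γ completely positive, trace(WΓ) = 1 }`. -/
theorem completely_positive_reformulation (d : ℕ)
    (B W : Matrix (Fin d) (Fin d) ℝ) (hB : B.IsSymm) (hW : W.IsSymm)
    (hWpos : ∀ γ : Fin d → ℝ, (∀ h, 0 ≤ γ h) → γ ≠ 0 → 0 < γ ⬝ᵥ W.mulVec γ) :
    sSup {x : ℝ | ∃ γ : Fin d → ℝ, (∀ h, 0 ≤ γ h) ∧ γ ⬝ᵥ W.mulVec γ = 1 ∧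
        x = γ ⬝ᵥ B.mulVec γ} =
    sSup {x : ℝ | ∃ Γ : Matrix (Fin d) (Fin d) ℝ, CompletelyPositive Γ ∧
        (W * Γ).trace = 1 ∧ x = (B * Γ).trace} := by
  set S1 := {x : ℝ | ∃ γ : Fin d → ℝ, (∀ h, 0 ≤ γ h) ∧ γ ⬝ᵥ W.mulVec γ = 1 ∧
      x = γ ⬝ᵥ B.mulVec γ} with hS1
  set S2 := {x : ℝ | ∃ Γ : Matrix (Fin d) (Fin d) ℝ, CompletelyPositive Γ ∧
      (W * Γ).trace = 1 ∧ x = (B * Γ).trace} with hS2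
  -- S1 ⊆ S2
  have hsub : S1 ⊆ S2 := by
    rintro x ⟨γ, hγ, hγW, rfl⟩
    set Y : Matrix (Fin d) (Fin 1) ℝ := fun i _ => γ i with hY
    have hcol : (fun i => Y i 0) = γ := rfl
    refine ⟨Y * Yᵀ, ⟨1, le_refl 1, Y, fun i j => hγ i, rfl⟩, ?_, ?_⟩
    · rw [trace_factor]; simp [hcol, hγW]
    · rw [trace_factor]; simp [hcol]
  -- key bound: every element of S2 is ≤ any upper bound of S1
  have key : ∀ M : ℝ, M ∈ upperBounds S1 → ∀ x ∈ S2, x ≤ M := by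
    rintro M hM x ⟨Γ, ⟨k, hk, Y, hYpos, rfl⟩, htr, rfl⟩
    set c : Fin k → Fin d → ℝ := fun l i => Y i l with hc
    have hcn : ∀ l, ∀ i, 0 ≤ c l i := fun l i => hYpos i l
    set t : Fin k → ℝ := fun l => c l ⬝ᵥ W.mulVec (c l) with htd
    set q : Fin k → ℝ := fun l => c l ⬝ᵥ B.mulVec (c l) with hqd
    have hsumt : ∑ l, t l = 1 := by rw [← trace_factor]; exact htr
    have hq : ∀ l, q l ≤ t l * M := by
      intro l
      by_cases hz : c l = 0
      · have hq0 : q l = 0 := by simp [hqd, hz]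
        have ht0 : t l = 0 := by simp [htd, hz]
        rw [hq0, ht0, zero_mul]
      · have htl : 0 < t l := hWpos (c l) (hcn l) hz
        have := hM (normalize_mem B W (c l) (hcn l) htl)
        rw [div_le_iff₀ htl] at this
        linarith [this]
    calc (B * (Y * Yᵀ)).trace = ∑ l, q l := trace_factor B Y
      _ ≤ ∑ l, t l * M := Finset.sum_le_sum fun l _ => hq l
      _ = (∑ l, t l) * M := by rw [Finset.sum_mul]
      _ = M := by rw [hsumt, one_mul]
  -- S2 nonempty → S1 nonempty
  have h21 : S2.Nonempty → S1.Nonempty := by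
    rintro ⟨x, Γ, ⟨k, hk, Y, hYpos, rfl⟩, htr, rfl⟩
    set c : Fin k → Fin d → ℝ := fun l i => Y i l with hc
    have hsumt : ∑ l, c l ⬝ᵥ W.mulVec (c l) = 1 := by rw [← trace_factor]; exact htr
    have hex : ∃ l, 0 < c l ⬝ᵥ W.mulVec (c l) := by
      by_contra h
      push_neg at h
      have : ∑ l, c l ⬝ᵥ W.mulVec (c l) ≤ 0 :=
        Finset.sum_nonpos fun l _ => h l
      linarith [hsumt ▸ this]
    obtain ⟨l, hl⟩ := hex
    exact ⟨_, normalize_mem B W (c l) (fun i => hYpos i l) hl⟩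
  by_cases h1 : S1.Nonempty
  · by_cases hbdd : BddAbove S1
    · obtain ⟨M, hM⟩ := hbdd
      have hbdd2 : BddAbove S2 := ⟨M, fun x hx => key M hM x hx⟩
      refine le_antisymm (csSup_le_csSup hbdd2 h1 hsub) (csSup_le (h1.mono hsub) ?_)
      intro x hx
      exact key (sSup S1) (fun y hy => le_csSup ⟨M, hM⟩ hy) x hx
    · have hbdd2 : ¬BddAbove S2 := fun h => hbdd (h.mono hsub)
      rw [Real.sSup_of_not_bddAbove hbdd, Real.sSup_of_not_bddAbove hbdd2]
  · have h2 : ¬S2.Nonempty := fun h => h1 (h21 h)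
    rw [Set.not_nonempty_iff_eq_empty] at h1 h2
    rw [h1, h2]
end
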